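/- Let q be a prime power, n ≥ 1, and N = q^{n+1} - 2q^n + 1. For every integer l with 0 < l < N/(q-1), the binomial coefficient binom(N, l(q-1)) vanishes modulo p. -/

import Mathlib

open Nat

lemma lucas_pow (p : ℕ) [Fact p.Prime] (e : ℕ) (n k : ℕ) :
    Nat.choose n k ≡
      Nat.choose (n / p ^ e) (k / p ^ e) * Nat.choose (n % p ^ e) (k % p ^ e) [ZMOD p] := by
  induction e generalizing n k with
  | zero => simp [Nat.mod_one, Int.ModEq.refl]
  | succ e ih =>
    have base : ∀ a b : ℕ, Nat.choose a b ≡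
        Nat.choose (a % p) (b % p) * Nat.choose (a / p) (b / p) [ZMOD p] :=
      fun a b => Choose.choose_modEq_choose_mod_mul_choose_div
    have h1 : (Nat.choose n k : ℤ) ≡
        Nat.choose (n % p) (k % p) *
          (Nat.choose (n / p / p ^ e) (k / p / p ^ e) *
            Nat.choose (n / p % p ^ e) (k / p % p ^ e)) [ZMOD p] :=
      (base n k).trans (Int.ModEq.mul_left _ (ih (n / p) (k / p)))
    have hd : ∀ a : ℕ, a / p / p ^ e = a / p ^ (e + 1) := by
      intro a; rw [Nat.div_div_eq_div_mul, ← _root_.pow_succ']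
    have hm1 : ∀ a : ℕ, a % p ^ (e + 1) % p = a % p := by
      intro a; exact Nat.mod_mod_of_dvd _ (dvd_pow_self p (Nat.succ_ne_zero e))
    have hm2 : ∀ a : ℕ, a % p ^ (e + 1) / p = a / p % p ^ e := by
      intro a; rw [_root_.pow_succ']; exact Nat.mod_mul_right_div_self a p (p ^ e)
    have h2 : (Nat.choose (n % p ^ (e + 1)) (k % p ^ (e + 1)) : ℤ) ≡
        Nat.choose (n % p) (k % p) *
          Nat.choose (n / p % p ^ e) (k / p % p ^ e) [ZMOD p] := by
      have := base (n % p ^ (e + 1)) (k % p ^ (e + 1))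
      rwa [hm1, hm1, hm2, hm2] at this
    calc (Nat.choose n k : ℤ)
        ≡ _ [ZMOD p] := h1
      _ = Nat.choose (n / p ^ (e + 1)) (k / p ^ (e + 1)) *
            ((Nat.choose (n % p) (k % p) : ℤ) *
              Nat.choose (n / p % p ^ e) (k / p % p ^ e)) := by rw [hd, hd]; ring
      _ ≡ Nat.choose (n / p ^ (e + 1)) (k / p ^ (e + 1)) *
            Nat.choose (n % p ^ (e + 1)) (k % p ^ (e + 1)) [ZMOD p] :=
          Int.ModEq.mul_left _ h2.symm

theorem stmt_4 (p s q : ℕ) (hp : p.Prime) (hs : 0 < s) (hq : q = p ^ s)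
    (n : ℕ) (hn : 1 ≤ n) (l : ℕ) (hl : 0 < l)
    (hl2 : l < (q ^ (n + 1) - 2 * q ^ n + 1) / (q - 1)) :
    ((Nat.choose (q ^ (n + 1) - 2 * q ^ n + 1) (l * (q - 1)) : ZMod p)) = 0 := by
  haveI : Fact p.Prime := ⟨hp⟩
  have hq2 : 2 ≤ q := by
    rw [hq]
    calc 2 ≤ p := hp.two_le
      _ = p ^ 1 := (pow_one p).symm
      _ ≤ p ^ s := Nat.pow_le_pow_right hp.pos hs
  set N := q ^ (n + 1) - 2 * q ^ n + 1 with hN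
  set k := l * (q - 1) with hk
  have hQpos : 0 < q ^ n := Nat.pow_pos (by omega)
  have hQ1 : 1 < q ^ n := by
    calc 1 < q := by omega
      _ = q ^ 1 := (pow_one q).symm
      _ ≤ q ^ n := Nat.pow_le_pow_right (by omega) hn
  obtain ⟨A, hA⟩ : ∃ A, q ^ n = A + 1 := ⟨q ^ n - 1, by omega⟩
  have hNeq : N = (q - 2) * q ^ n + 1 := by
    have h : q ^ (n + 1) = q * q ^ n := by ring
    rw [hN, h, ← Nat.sub_mul]
  have hmulsucc : (q - 2) * (A + 1) = (q - 2) * A + (q - 2) := Nat.mul_succ _ _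
  -- q - 1 divides N
  have hdvdpow : (q - 1) ∣ q ^ n - 1 := by
    have h := Nat.sub_dvd_pow_sub_pow q 1 n
    simpa using h
  have hNdecomp : N = (q - 2) * (q ^ n - 1) + (q - 1) := by
    rw [hNeq, hA]
    simp only [Nat.add_sub_cancel]
    omega
  have hdvdN : (q - 1) ∣ N := by
    rw [hNdecomp]; exact Dvd.dvd.add (Dvd.dvd.mul_left hdvdpow _) dvd_rfl
  have hkN : k < N := by
    have h := (Nat.lt_div_iff_mul_lt' hdvdN l).mp hl2
    calc k = (q - 1) * l := by rw [hk]; ring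
      _ < N := h
  -- q ^ n = p ^ (s * n)
  have hqn : q ^ n = p ^ (s * n) := by rw [hq, ← pow_mul]
  obtain ⟨m, hm⟩ : ∃ m, k / q ^ n = m := ⟨_, rfl⟩
  obtain ⟨r, hr⟩ : ∃ r, k % q ^ n = r := ⟨_, rfl⟩
  have hNeq' : N = q ^ n * (q - 2) + 1 := by rw [hNeq]; ring
  have hNdiv : N / q ^ n = q - 2 := by
    rw [hNeq', Nat.mul_add_div hQpos, Nat.div_eq_of_lt hQ1]
    omega
  have hNmod : N % q ^ n = 1 := by
    rw [hNeq', Nat.mul_add_mod, Nat.mod_eq_of_lt hQ1]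
  have lucas := lucas_pow p (s * n) N k
  rw [← hqn] at lucas
  rw [hNdiv, hNmod, hm, hr] at lucas
  have hcast : ((Nat.choose N k : ZMod p)) =
      (Nat.choose (q - 2) m : ZMod p) * (Nat.choose 1 r : ZMod p) := by
    have h := (ZMod.intCast_eq_intCast_iff _ _ _).mpr lucas
    push_cast at h
    exact_mod_cast h
  rw [hcast]
  by_cases hr2 : 2 ≤ r
  · have h : Nat.choose 1 r = 0 := Nat.choose_eq_zero_of_lt (by omega)
    rw [h]; simp
  by_cases hm2 : q - 2 < m
  · have h : Nat.choose (q - 2) m = 0 := Nat.choose_eq_zero_of_lt hm2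
    rw [h]; simp
  exfalso
  push_neg at hr2 hm2
  have hkeq : k = m * q ^ n + r := by
    rw [← hm, ← hr]; exact (Nat.div_add_mod' k (q ^ n)).symm
  have hmsucc : m * (A + 1) = m * A + m := Nat.mul_succ _ _
  have hkA : k = m * (A + 1) + r := by rw [hkeq, hA]
  have hmr : (q - 1) ∣ m + r := by
    have h1 : m + r = k - m * (q ^ n - 1) := by
      rw [hkA, hA]
      simp only [Nat.add_sub_cancel]
      omega
    have h2 : (q - 1) ∣ k := ⟨l, by rw [hk]; ring⟩
    have h3 : (q - 1) ∣ m * (q ^ n - 1) := Dvd.dvd.mul_left hdvdpow m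
    rw [h1]
    exact Nat.dvd_sub h2 h3
  have hmrle : m + r ≤ q - 1 := by omega
  rcases Nat.eq_zero_or_pos (m + r) with h0 | hpos
  · have hm0 : m = 0 := by omega
    have hr0 : r = 0 := by omega
    rw [hm0, hr0] at hkeq
    simp at hkeq
    rw [hk] at hkeq
    rcases Nat.mul_eq_zero.mp hkeq with h | h <;> omega
  · have heq : m + r = q - 1 := by
      have h := Nat.le_of_dvd hpos hmr
      omega
    have hmv : m = q - 2 := by omega
    have hrv : r = 1 := by omega
    have hkNeq : k = N := by rw [hkeq, hmv, hrv, hNeq]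
    omega
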